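/- Let G be a graph with n vertices, m edges, and degree sequence d(1), ..., d(n). Then (6·k₃(G) − Σ_{i=1}^{n} d(i)² + n·m) · bk(G) ≥ n·k₃(G) + 8·k₄(G) + 2·k₄^{(3)}(G). -/

import Mathlib

open Finset
open scoped Classical

/-- The booksize of `G`: the maximum over edges `uv` of `G` of the number of
common neighbors of `u` and `v` (`0` if `G` has no edges). -/
noncomputable def bk {V : Type*} [Fintype V] (G : SimpleGraph V) : ℕ :=
  (Finset.univ.filter fun p : V × V => G.Adj p.1 p.2).sup
    fun p => (G.neighborSet p.1 ∩ G.neighborSet p.2).ncard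

/-- The number of `s`-cliques of `G`. -/
noncomputable def cliqueCount {V : Type*} [Fintype V] (G : SimpleGraph V) (s : ℕ) : ℕ :=
  (G.cliqueFinset s).card

/-- The number of induced subgraphs of `G` isomorphic to `H`. -/
noncomputable def inducedCopies {V W : Type*} [Fintype V] (G : SimpleGraph V)
    (H : SimpleGraph W) : ℕ :=
  {s : Set V | Nonempty (G.induce s ≃g H)}.ncard

/-- `K4j j` is the graph `K₄^(j)`: a triangle on `{0,1,2}` together with the vertex `3`
joined to precisely `3 - j` of its vertices. -/
def K4j (j : ℕ) : SimpleGraph (Fin 4) :=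
  SimpleGraph.fromRel fun a b => (a.val < 3 ∧ b.val < 3) ∨ (a.val = 3 ∧ b.val < 3 - j)

/-- The codegree function `d̂`, as a function on unordered pairs. -/
noncomputable def codegSym {V : Type*} [Fintype V] (G : SimpleGraph V) : Sym2 V → ℕ :=
  Sym2.lift ⟨fun u v => (G.neighborSet u ∩ G.neighborSet v).ncard,
    fun u v => by simp [Set.inter_comm]⟩

/-- `|Γ'(u) ∩ Γ'(v)|`, where `Γ'(x) = V ∖ Γ(x)`, as a function on unordered pairs. -/
noncomputable def noncodegSym {V : Type*} [Fintype V] (G : SimpleGraph V) : Sym2 V → ℕ :=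
  Sym2.lift ⟨fun u v => ((G.neighborSet u)ᶜ ∩ (G.neighborSet v)ᶜ).ncard,
    fun u v => by simp [Set.inter_comm]⟩


section BookProof

variable {V : Type*} [Fintype V] (G : SimpleGraph V)

/-- common neighbors of the endpoints of an unordered pair -/
noncomputable def cS : Sym2 V → Finset V :=
  Sym2.lift ⟨fun u v => univ.filter fun x => G.Adj u x ∧ G.Adj v x,
    fun u v => by ext x; simp [and_comm]⟩

/-- common non-neighbors of the endpoints of an unordered pair -/
noncomputable def nS : Sym2 V → Finset V :=
  Sym2.lift ⟨fun u v => univ.filter fun x => ¬ G.Adj u x ∧ ¬ G.Adj v x,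
    fun u v => by ext x; simp [and_comm]⟩

/-- sum of the degrees of the endpoints of an unordered pair -/
noncomputable def degSum : Sym2 V → ℕ :=
  Sym2.lift ⟨fun u v => G.degree u + G.degree v, fun u v => by simp [add_comm]⟩

/-- endpoints of an unordered pair, as a finset -/
noncomputable def eF : Sym2 V → Finset V :=
  Sym2.lift ⟨fun u v => {u, v}, fun u v => by ext x; simp [or_comm]⟩

/-- the (potential) edges spanned by a finset of vertices -/
noncomputable def pairsOf (s : Finset V) : Finset (Sym2 V) :=
  s.sym2.filter fun e => ¬ e.IsDiag

set_option linter.unusedSectionVars false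

lemma pairsOf_triple {a b c : V} (hab : a ≠ b) (hac : a ≠ c) (hbc : b ≠ c) :
    pairsOf ({a, b, c} : Finset V) = {s(a,b), s(a,c), s(b,c)} := by
  ext e
  induction e with
  | _ x y =>
    simp only [pairsOf, mem_filter, Finset.mk_mem_sym2_iff, mem_insert, mem_singleton,
      Sym2.mk_isDiag_iff, Sym2.eq_iff]
    constructor
    · rintro ⟨⟨hx | hx | hx, hy | hy | hy⟩, hxy⟩ <;> subst_vars <;> tauto
    · rintro ((⟨rfl,rfl⟩|⟨rfl,rfl⟩)|(⟨rfl,rfl⟩|⟨rfl,rfl⟩)|(⟨rfl,rfl⟩|⟨rfl,rfl⟩)) <;>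
        refine ⟨⟨by tauto, by tauto⟩, ?_⟩ <;> intro h <;> subst h <;> tauto

lemma sumA (g : Sym2 V → ℕ) :
    ∑ s ∈ G.cliqueFinset 3, ∑ e ∈ pairsOf s, g e
      = ∑ e ∈ G.edgeFinset, (cS G e).card * g e := by
  have key : ∀ e, (cS G e).card * g e = ∑ _w ∈ cS G e, g e := fun e => by
    rw [Finset.sum_const, smul_eq_mul, mul_comm]
  simp_rw [key]
  rw [show ∑ s ∈ G.cliqueFinset 3, ∑ e ∈ pairsOf s, g e
      = ∑ x ∈ (G.cliqueFinset 3).sigma (fun s => pairsOf s), g x.2 from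
    (Finset.sum_sigma _ _ (fun x : (_ : Finset V) × Sym2 V => g x.2)).symm,
    show ∑ e ∈ G.edgeFinset, ∑ _w ∈ cS G e, g e
      = ∑ x ∈ G.edgeFinset.sigma (fun e => cS G e), g x.1 from
    (Finset.sum_sigma _ _ (fun x : (_ : Sym2 V) × V => g x.1)).symm]
  refine (Finset.sum_bij (fun (a : Σ _e : Sym2 V, V) (_ : a ∈ G.edgeFinset.sigma (cS G))
    => (⟨insert a.2 (eF a.1), a.1⟩ : Σ _s : Finset V, Sym2 V)) ?_ ?_ ?_ ?_).symm
  · rintro ⟨e, w⟩ ha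
    induction e with
    | _ u v =>
      rw [Finset.mem_sigma] at ha
      obtain ⟨he, hw⟩ := ha
      rw [SimpleGraph.mem_edgeFinset, SimpleGraph.mem_edgeSet] at he
      simp only [cS, Sym2.lift_mk, mem_filter] at hw
      rw [Finset.mem_sigma]
      constructor
      · rw [SimpleGraph.mem_cliqueFinset_iff, SimpleGraph.is3Clique_iff]
        refine ⟨u, v, w, he, hw.2.1, hw.2.2, ?_⟩
        show insert w ({u, v} : Finset V) = {u, v, w}
        ext x; simp; tauto
      · simp only [pairsOf, mem_filter, Finset.mk_mem_sym2_iff]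
        refine ⟨⟨?_, ?_⟩, by simp [he.ne]⟩ <;> simp [eF]
  · rintro ⟨e₁, w₁⟩ h₁ ⟨e₂, w₂⟩ h₂ heq
    have hins := congrArg (fun p : (_ : Finset V) × Sym2 V => p.1) heq
    have hsnd := congrArg (fun p : (_ : Finset V) × Sym2 V => p.2) heq
    simp only at hins hsnd
    obtain rfl := hsnd
    rw [Finset.mem_sigma] at h₁ h₂
    have hw : ∀ w, w ∈ cS G e₁ → w ∉ eF e₁ := by
      induction e₁ with
      | _ u v =>
        intro w hw
        simp only [cS, Sym2.lift_mk, mem_filter] at hw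
        simp only [eF, Sym2.lift_mk, mem_insert, mem_singleton]
        rintro (rfl | rfl) <;> exact (G.irrefl (by tauto))
    have h1' := hw w₁ h₁.2
    have h2' := hw w₂ h₂.2
    have : w₁ ∈ insert w₂ (eF e₁) := hins ▸ Finset.mem_insert_self w₁ (eF e₁)
    rcases Finset.mem_insert.1 this with rfl | h
    · rfl
    · exact absurd h h1'
  · rintro ⟨s, e⟩ hb
    rw [Finset.mem_sigma] at hb
    obtain ⟨hs, he⟩ := hb
    rw [SimpleGraph.mem_cliqueFinset_iff] at hs
    simp only [pairsOf, mem_filter] at he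
    induction e with
    | _ u v =>
      obtain ⟨hmem, hdiag⟩ := he
      rw [Finset.mk_mem_sym2_iff] at hmem
      rw [Sym2.mk_isDiag_iff] at hdiag
      -- find the third vertex
      have hcard : ({u, v} : Finset V).card = 2 := by
        rw [Finset.card_insert_of_notMem (by simpa using hdiag), Finset.card_singleton]
      have hsub : ({u, v} : Finset V) ⊆ s := by
        intro x hx; rcases Finset.mem_insert.1 hx with rfl | hx
        · exact hmem.1
        · rw [Finset.mem_singleton] at hx; subst hx; exact hmem.2
      have : (s \ ({u, v} : Finset V)).Nonempty := by
        rw [← Finset.card_pos, Finset.card_sdiff_of_subset hsub, hs.2, hcard]; norm_num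
      obtain ⟨w, hwmem⟩ := this
      rw [Finset.mem_sdiff] at hwmem
      have hwu : w ≠ u := fun h => hwmem.2 (by simp [h])
      have hwv : w ≠ v := fun h => hwmem.2 (by simp [h])
      have hseq : s = insert w ({u, v} : Finset V) := by
        refine (Finset.eq_of_subset_of_card_le ?_ ?_).symm
        · intro x hx; rcases Finset.mem_insert.1 hx with rfl | hx
          · exact hwmem.1
          · exact hsub hx
        · rw [hs.2, Finset.card_insert_of_notMem (by simp [hwu, hwv]), hcard]
      have hadj : G.Adj u w ∧ G.Adj v w := by
        constructor
        · exact hs.1 (by exact_mod_cast hmem.1) (by exact_mod_cast hwmem.1) (Ne.symm hwu)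
        · exact hs.1 (by exact_mod_cast hmem.2) (by exact_mod_cast hwmem.1) (Ne.symm hwv)
      refine ⟨⟨s(u, v), w⟩, ?_, ?_⟩
      · rw [Finset.mem_sigma]
        constructor
        · rw [SimpleGraph.mem_edgeFinset, SimpleGraph.mem_edgeSet]
          exact hs.1 (by exact_mod_cast hmem.1) (by exact_mod_cast hmem.2) hdiag
        · simp [cS, hadj.1, hadj.2]
      · subst hseq; rfl
  · intros; rfl


lemma pairs_card3 {s : Finset V} (hs : s ∈ G.cliqueFinset 3) : (pairsOf s).card = 3 := by
  rw [SimpleGraph.mem_cliqueFinset_iff, SimpleGraph.is3Clique_iff] at hs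
  obtain ⟨a, b, c, hab, hac, hbc, rfl⟩ := hs
  have nab : a ≠ b := hab.ne
  have nac : a ≠ c := hac.ne
  have nbc : b ≠ c := hbc.ne
  rw [pairsOf_triple nab nac nbc]
  have e1 : s(a,b) ≠ s(a,c) := fun h => by
    rcases Sym2.eq_iff.1 h with ⟨h1, h2⟩ | ⟨h1, h2⟩ <;> simp_all
  have e2 : s(a,b) ≠ s(b,c) := fun h => by
    rcases Sym2.eq_iff.1 h with ⟨h1, h2⟩ | ⟨h1, h2⟩ <;> simp_all
  have e3 : s(a,c) ≠ s(b,c) := fun h => by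
    rcases Sym2.eq_iff.1 h with ⟨h1, h2⟩ | ⟨h1, h2⟩ <;> simp_all
  rw [Finset.card_insert_of_notMem (by simp [e1, e2]),
    Finset.card_insert_of_notMem (by simp [e3]), Finset.card_singleton]
lemma key (s : Finset V) (hs : s ∈ G.cliqueFinset 3) (x : V) :
    ((pairsOf s).filter fun e => x ∈ cS G e).card
      + ((pairsOf s).filter fun e => x ∈ nS G e).card
    ≥ 1 + 2 * (if ∀ y ∈ s, G.Adj x y then 1 else 0)
        + 2 * (if ∀ y ∈ s, ¬ G.Adj x y then 1 else 0) := by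
  rw [SimpleGraph.mem_cliqueFinset_iff, SimpleGraph.is3Clique_iff] at hs
  obtain ⟨a, b, c, hab, hac, hbc, rfl⟩ := hs
  have nab : a ≠ b := hab.ne
  have nac : a ≠ c := hac.ne
  have nbc : b ≠ c := hbc.ne
  rw [pairsOf_triple nab nac nbc]
  have e1 : s(a,b) ≠ s(a,c) := by simp [Sym2.eq_iff]; tauto
  have e2 : s(a,b) ≠ s(b,c) := by simp [Sym2.eq_iff]; tauto
  have e3 : s(a,c) ≠ s(b,c) := by simp [Sym2.eq_iff]; tauto
  have hmc : ∀ u v : V, (x ∈ cS G s(u,v)) = (G.Adj x u ∧ G.Adj x v) := by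
    intro u v; simp only [cS, Sym2.lift_mk, mem_filter, mem_univ, true_and, eq_iff_iff]
    rw [G.adj_comm u x, G.adj_comm v x]
  have hmn : ∀ u v : V, (x ∈ nS G s(u,v)) = (¬ G.Adj x u ∧ ¬ G.Adj x v) := by
    intro u v; simp only [nS, Sym2.lift_mk, mem_filter, mem_univ, true_and, eq_iff_iff]
    rw [G.adj_comm u x, G.adj_comm v x]
  have hall : (∀ y ∈ ({a,b,c} : Finset V), G.Adj x y) ↔ (G.Adj x a ∧ G.Adj x b ∧ G.Adj x c) := by
    simp
  have hnone : (∀ y ∈ ({a,b,c} : Finset V), ¬ G.Adj x y)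
      ↔ (¬ G.Adj x a ∧ ¬ G.Adj x b ∧ ¬ G.Adj x c) := by
    simp
  by_cases h1 : G.Adj x a <;> by_cases h2 : G.Adj x b <;> by_cases h3 : G.Adj x c <;>
    simp [Finset.filter_insert, Finset.filter_singleton, hmc, hmn, hall, hnone, h1, h2, h3,
      e1, e2, e3, Finset.card_insert_of_notMem]

lemma card_eq_sum_ite (t : Finset V) : t.card = ∑ x : V, if x ∈ t then 1 else 0 := by
  rw [Finset.sum_ite_mem, Finset.univ_inter, Finset.card_eq_sum_ones]

lemma swap1 (s : Finset V) :
    ∑ e ∈ pairsOf s, ((cS G e).card + (nS G e).card)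
      = ∑ x : V, (((pairsOf s).filter fun e => x ∈ cS G e).card
          + ((pairsOf s).filter fun e => x ∈ nS G e).card) := by
  simp_rw [Finset.card_filter, _root_.card_eq_sum_ite, ← Finset.sum_add_distrib]
  rw [Finset.sum_comm]

lemma sumC : ∑ s ∈ G.cliqueFinset 3, (univ.filter fun x => ∀ y ∈ s, G.Adj x y).card
    = 4 * (G.cliqueFinset 4).card := by
  rw [← Finset.card_sigma]
  have h4 : 4 * (G.cliqueFinset 4).card = ∑ S ∈ G.cliqueFinset 4, S.card := by
    rw [Finset.sum_congr rfl (fun S hS => (SimpleGraph.mem_cliqueFinset_iff.1 hS).2), Finset.sum_const,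
      smul_eq_mul, mul_comm]
  rw [h4, ← Finset.card_sigma]
  refine Finset.card_bij' (fun (p : Σ _s : Finset V, V) _ => (⟨insert p.2 p.1, p.2⟩ : Σ _S : Finset V, V))
    (fun (p : Σ _S : Finset V, V) _ => (⟨p.1.erase p.2, p.2⟩ : Σ _s : Finset V, V)) ?_ ?_ ?_ ?_
  · rintro ⟨s, x⟩ hp
    rw [Finset.mem_sigma] at hp ⊢
    obtain ⟨hs, hx⟩ := hp
    rw [SimpleGraph.mem_cliqueFinset_iff] at hs
    simp only [mem_filter, mem_univ, true_and] at hx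
    have hadj : ∀ b ∈ s, G.Adj x b := hx
    refine ⟨?_, by simp⟩
    rw [SimpleGraph.mem_cliqueFinset_iff]
    exact hs.insert hadj
  · rintro ⟨S, x⟩ hp
    rw [Finset.mem_sigma] at hp ⊢
    obtain ⟨hS, hx⟩ := hp
    rw [SimpleGraph.mem_cliqueFinset_iff] at hS
    constructor
    · rw [SimpleGraph.mem_cliqueFinset_iff]
      constructor
      · exact hS.1.subset (by simp [Finset.erase_subset])
      · rw [Finset.card_erase_of_mem hx, hS.2]
    · simp only [mem_filter, mem_univ, true_and]
      intro y hy
      rw [Finset.mem_erase] at hy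
      exact hS.1 (by exact_mod_cast hx) (by exact_mod_cast hy.2) (Ne.symm hy.1)
  · rintro ⟨s, x⟩ hp
    rw [Finset.mem_sigma] at hp
    have hxs : x ∉ s := by
      intro hmem
      have := hp.2
      simp only [mem_filter, mem_univ, true_and] at this
      exact G.irrefl (this x hmem)
    simp [Finset.erase_insert hxs]
  · rintro ⟨S, x⟩ hp
    rw [Finset.mem_sigma] at hp
    simp [Finset.insert_erase hp.2]


lemma K4j3_adj (a b : Fin 4) : (K4j 3).Adj a b ↔ a ≠ b ∧ a.val < 3 ∧ b.val < 3 := by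
  simp only [K4j, SimpleGraph.fromRel_adj]
  constructor
  · rintro ⟨h, h2⟩; exact ⟨h, by omega⟩
  · rintro ⟨h, h2, h3⟩; exact ⟨h, Or.inl (Or.inl ⟨h2, h3⟩)⟩

variable {V : Type*} [Fintype V] (G : SimpleGraph V)


lemma induce_adj' (A : Set V) (u v : A) : (G.induce A).Adj u v ↔ G.Adj ↑u ↑v := by
  simp [SimpleGraph.comap_adj]

lemma not_mem_of_nonadj {s : Finset V} {x : V} (hs : G.IsNClique 3 s)
    (hx : ∀ y ∈ s, ¬ G.Adj x y) : x ∉ s := by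
  intro hmem
  have hne : (s.erase x).Nonempty := by
    rw [← Finset.card_pos, Finset.card_erase_of_mem hmem, hs.2]; norm_num
  obtain ⟨y, hy⟩ := hne
  rw [Finset.mem_erase] at hy
  exact hx y hy.2 (hs.1 (by exact_mod_cast hmem) (by exact_mod_cast hy.2) (Ne.symm hy.1))


lemma induced_iff (A : Set V) :
    Nonempty (G.induce A ≃g K4j 3) ↔
      ∃ s x, s ∈ G.cliqueFinset 3 ∧ (∀ y ∈ s, ¬ G.Adj x y)
        ∧ A = ↑(insert x s) := by
  constructor
  · rintro ⟨φ⟩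
    set ψ := φ.symm with hψ
    have hAdj : ∀ i j, G.Adj ↑(ψ i) ↑(ψ j) ↔ (K4j 3).Adj i j := by
      intro i j
      rw [← induce_adj' G A (ψ i) (ψ j)]
      exact ψ.map_adj_iff
    have hval : ∀ i j : Fin 4, i ≠ j → (↑(ψ i) : V) ≠ ↑(ψ j) := by
      intro i j hij h
      exact hij (ψ.toEquiv.injective (Subtype.ext h))
    have hsurj : ∀ a (ha : a ∈ A), ∃ i, ψ i = ⟨a, ha⟩ := fun a ha => ⟨φ ⟨a, ha⟩, by simp [hψ]⟩
    have adj01 : G.Adj ↑(ψ 0) ↑(ψ 1) := (hAdj 0 1).2 ((K4j3_adj 0 1).2 (by decide))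
    have adj02 : G.Adj ↑(ψ 0) ↑(ψ 2) := (hAdj 0 2).2 ((K4j3_adj 0 2).2 (by decide))
    have adj12 : G.Adj ↑(ψ 1) ↑(ψ 2) := (hAdj 1 2).2 ((K4j3_adj 1 2).2 (by decide))
    refine ⟨{↑(ψ 0), ↑(ψ 1), ↑(ψ 2)}, ↑(ψ 3), ?_, ?_, ?_⟩
    · rw [SimpleGraph.mem_cliqueFinset_iff, SimpleGraph.is3Clique_triple_iff]
      exact ⟨adj01, adj02, adj12⟩
    · intro y hy
      simp only [Finset.mem_insert, Finset.mem_singleton] at hy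
      rcases hy with rfl | rfl | rfl <;>
      · intro h
        rw [hAdj, K4j3_adj] at h
        revert h; decide
    · ext a
      simp only [Finset.coe_insert, Set.mem_insert_iff, Finset.coe_singleton]
      constructor
      · intro ha
        obtain ⟨i, hi⟩ := hsurj a ha
        have : a = ↑(ψ i) := by rw [hi]
        fin_cases i <;> simp [this] <;> tauto
      · rintro (rfl | rfl | rfl | rfl) <;> exact Subtype.coe_prop _
  · rintro ⟨s, x, hs, hx, rfl⟩
    rw [SimpleGraph.mem_cliqueFinset_iff] at hs
    have hxs := not_mem_of_nonadj G hs hx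
    obtain ⟨a, b, c, hab, hac, hbc, rfl⟩ := SimpleGraph.is3Clique_iff.1 hs
    have nab : a ≠ b := hab.ne
    have nac : a ≠ c := hac.ne
    have nbc : b ≠ c := hbc.ne
    have nxa : ¬ G.Adj x a := hx a (by simp)
    have nxb : ¬ G.Adj x b := hx b (by simp)
    have nxc : ¬ G.Adj x c := hx c (by simp)
    have nax : ¬ G.Adj a x := fun h => nxa h.symm
    have nbx : ¬ G.Adj b x := fun h => nxb h.symm
    have ncx : ¬ G.Adj c x := fun h => nxc h.symm
    have hxa : x ≠ a := by rintro rfl; simp at hxs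
    have hxb : x ≠ b := by rintro rfl; simp at hxs
    have hxc : x ≠ c := by rintro rfl; simp at hxs
    set A : Set V := ↑(insert x ({a, b, c} : Finset V)) with hA
    let g : Fin 4 → V := ![a, b, c, x]
    have hgA : ∀ i, g i ∈ A := by intro i; fin_cases i <;> simp [g, hA]
    let f : Fin 4 → A := fun i => ⟨g i, hgA i⟩
    have finj : Function.Injective f := by
      intro i j h
      rw [Subtype.ext_iff] at h
      fin_cases i <;> fin_cases j <;> simp_all [g, f] <;>
        first
          | rfl
          | exact absurd h (by assumption)
          | exact absurd h (Ne.symm (by assumption))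
    have fsurj : Function.Surjective f := by
      rintro ⟨v, hv⟩
      simp only [hA, Finset.coe_insert, Set.mem_insert_iff, Finset.coe_singleton,
        Finset.mem_insert, Finset.mem_singleton, Finset.mem_coe] at hv
      rcases hv with rfl | rfl | rfl | rfl
      · exact ⟨3, rfl⟩
      · exact ⟨0, rfl⟩
      · exact ⟨1, rfl⟩
      · exact ⟨2, rfl⟩
    let e : Fin 4 ≃ A := Equiv.ofBijective f ⟨finj, fsurj⟩
    have hmap : ∀ i j : Fin 4, (G.induce A).Adj (e i) (e j) ↔ (K4j 3).Adj i j := by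
      intro i j
      rw [induce_adj']
      show G.Adj (g i) (g j) ↔ _
      rw [K4j3_adj]
      fin_cases i <;> fin_cases j <;>
        simp [g, hab, hac, hbc, hab.symm, hac.symm, hbc.symm, nax, nbx, ncx, nxa, nxb, nxc,
          G.irrefl]
    exact ⟨(RelIso.mk e fun {i j} => hmap i j).symm⟩


lemma uniq {s₁ s₂ : Finset V} {x₁ x₂ : V} (h₁ : G.IsNClique 3 s₁) (h₂ : G.IsNClique 3 s₂)
    (hx₁ : ∀ y ∈ s₁, ¬ G.Adj x₁ y) (hx₂ : ∀ y ∈ s₂, ¬ G.Adj x₂ y)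
    (heq : insert x₁ s₁ = insert x₂ s₂) : x₁ = x₂ ∧ s₁ = s₂ := by
  have hm₁ := not_mem_of_nonadj G h₁ hx₁
  have hm₂ := not_mem_of_nonadj G h₂ hx₂
  have hx12 : x₁ ∉ s₂ := by
    intro hmem
    have hne : (s₂.erase x₁).Nonempty := by
      rw [← Finset.card_pos, Finset.card_erase_of_mem hmem, h₂.2]; norm_num
    obtain ⟨z, hz⟩ := hne
    rw [Finset.mem_erase] at hz
    have hadj : G.Adj x₁ z := h₂.1 (by exact_mod_cast hmem) (by exact_mod_cast hz.2) (Ne.symm hz.1)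
    have hz1 : z ∈ insert x₁ s₁ := heq ▸ (Finset.mem_insert_of_mem hz.2)
    rcases Finset.mem_insert.1 hz1 with rfl | hz1
    · exact hz.1 rfl
    · exact hx₁ z hz1 hadj
  have hxx : x₁ = x₂ := by
    have : x₁ ∈ insert x₂ s₂ := heq ▸ Finset.mem_insert_self x₁ s₁
    rcases Finset.mem_insert.1 this with h | h
    · exact h
    · exact absurd h hx12
  subst hxx
  refine ⟨rfl, ?_⟩
  have := congrArg (fun t => Finset.erase t x₁) heq
  simpa [Finset.erase_insert hm₁, Finset.erase_insert hm₂] using this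


lemma sumD : ∑ s ∈ G.cliqueFinset 3, (univ.filter fun x => ∀ y ∈ s, ¬ G.Adj x y).card
    = inducedCopies G (K4j 3) := by
  classical
  set T := (G.cliqueFinset 3).sigma (fun s => univ.filter fun x => ∀ y ∈ s, ¬ G.Adj x y) with hT
  rw [← Finset.card_sigma]
  set S : Finset (Set V) := T.image (fun p => (↑(insert p.2 p.1) : Set V)) with hS
  have hset : {A : Set V | Nonempty (G.induce A ≃g K4j 3)} = ↑S := by
    ext A
    simp only [Set.mem_setOf_eq, hS, Finset.coe_image, Set.mem_image, Finset.mem_coe,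
      Finset.mem_sigma, hT, Finset.mem_filter, Finset.mem_univ, true_and]
    rw [induced_iff]
    constructor
    · rintro ⟨s, x, hs, hx, rfl⟩
      exact ⟨⟨s, x⟩, ⟨hs, hx⟩, by simp⟩
    · rintro ⟨⟨s, x⟩, ⟨hs, hx⟩, rfl⟩
      exact ⟨s, x, hs, hx, by simp⟩
  rw [inducedCopies, hset, Set.ncard_coe_finset, hS]
  rw [Finset.card_image_of_injOn]
  rintro ⟨s₁, x₁⟩ h₁ ⟨s₂, x₂⟩ h₂ heq
  simp only [hT, Finset.mem_coe, Finset.mem_sigma, SimpleGraph.mem_cliqueFinset_iff,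
    Finset.mem_filter, Finset.mem_univ, true_and] at h₁ h₂
  simp only at heq
  have heq' : insert x₁ s₁ = insert x₂ s₂ := Finset.coe_injective (by simpa using heq)
  obtain ⟨hx, hs⟩ := uniq G h₁.1 h₂.1 h₁.2 h₂.2 heq'
  subst hx; subst hs; rfl


lemma filter_adj_eq (u : V) : (univ.filter fun x => G.Adj u x) = G.neighborFinset u := by
  ext x; simp

lemma cS_le_bk {e : Sym2 V} (he : e ∈ G.edgeFinset) : (cS G e).card ≤ bk G := by
  induction e with
  | _ u v =>
    rw [SimpleGraph.mem_edgeFinset, SimpleGraph.mem_edgeSet] at he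
    have hmem : (u, v) ∈ univ.filter fun p : V × V => G.Adj p.1 p.2 := by simp [he]
    have hle := Finset.le_sup (f := fun p : V × V =>
      (G.neighborSet p.1 ∩ G.neighborSet p.2).ncard) hmem
    have hval : (G.neighborSet u ∩ G.neighborSet v).ncard = (cS G s(u,v)).card := by
      rw [show G.neighborSet u ∩ G.neighborSet v
            = ↑(univ.filter fun x => G.Adj u x ∧ G.Adj v x) by ext x; simp]
      rw [Set.ncard_coe_finset]; rfl
    rw [← hval]; exact hle

lemma edge_identity {e : Sym2 V} (he : e ∈ G.edgeFinset) :
    (nS G e).card + degSum G e = Fintype.card V + (cS G e).card := by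
  induction e with
  | _ u v =>
    have h1 : (univ.filter fun x => G.Adj u x ∨ G.Adj v x).card + (nS G s(u,v)).card
        = Fintype.card V := by
      rw [show (nS G s(u,v)) = univ.filter fun x => ¬ (G.Adj u x ∨ G.Adj v x) by
        ext x; simp [nS, not_or]]
      rw [Finset.card_filter_add_card_filter_not, Finset.card_univ]
    have h2 : (univ.filter fun x => G.Adj u x ∨ G.Adj v x).card + (cS G s(u,v)).card
        = G.degree u + G.degree v := by
      rw [show (univ.filter fun x => G.Adj u x ∨ G.Adj v x)
            = (univ.filter fun x => G.Adj u x) ∪ (univ.filter fun x => G.Adj v x) by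
        ext x; simp]
      rw [show (cS G s(u,v))
            = (univ.filter fun x => G.Adj u x) ∩ (univ.filter fun x => G.Adj v x) by
        ext x; simp [cS]]
      rw [Finset.card_union_add_card_inter, filter_adj_eq, filter_adj_eq]
      rfl
    have : degSum G s(u,v) = G.degree u + G.degree v := rfl
    omega

lemma sum_degSum : ∑ e ∈ G.edgeFinset, degSum G e = ∑ v : V, G.degree v * G.degree v := by
  have step : ∀ e ∈ G.edgeFinset, degSum G e = ∑ v : V, if v ∈ e then G.degree v else 0 := by
    intro e he
    induction e with
    | _ u v =>
      rw [SimpleGraph.mem_edgeFinset, SimpleGraph.mem_edgeSet] at he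
      rw [show (fun x => if x ∈ s(u,v) then G.degree x else 0)
            = fun x => if x ∈ ({u, v} : Finset V) then G.degree x else 0 by
          funext x; simp [Sym2.mem_iff]]
      rw [Finset.sum_ite_mem, Finset.univ_inter, Finset.sum_pair he.ne]
      rfl
  rw [Finset.sum_congr rfl step, Finset.sum_comm]
  refine Finset.sum_congr rfl fun v _ => ?_
  rw [← Finset.sum_filter, Finset.sum_const, smul_eq_mul]
  have : G.edgeFinset.filter (fun e => v ∈ e) = G.incidenceFinset v := by
    ext e
    simp [SimpleGraph.mem_incidenceFinset, SimpleGraph.incidenceSet, SimpleGraph.mem_edgeFinset]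
  rw [this, SimpleGraph.card_incidenceFinset_eq_degree]


end BookProof


theorem stmt0 {V : Type*} [Fintype V] (G : SimpleGraph V) (n m : ℕ)
    (hn : n = Fintype.card V) (hm : m = G.edgeFinset.card) :
    (6 * (cliqueCount G 3 : ℤ) - ∑ i : V, (G.degree i : ℤ) ^ 2 + (n : ℤ) * m) * bk G ≥
      (n : ℤ) * cliqueCount G 3 + 8 * cliqueCount G 4 + 2 * inducedCopies G (K4j 3) := by
  classical
  subst hn hm
  -- the natural number chain
  have hchain : Fintype.card V * (G.cliqueFinset 3).card + 8 * (G.cliqueFinset 4).card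
        + 2 * inducedCopies G (K4j 3)
      ≤ (∑ e ∈ G.edgeFinset, ((cS G e).card + (nS G e).card)) * bk G := by
    calc Fintype.card V * (G.cliqueFinset 3).card + 8 * (G.cliqueFinset 4).card
          + 2 * inducedCopies G (K4j 3)
        = ∑ s ∈ G.cliqueFinset 3, (Fintype.card V
            + 2 * (univ.filter fun x => ∀ y ∈ s, G.Adj x y).card
            + 2 * (univ.filter fun x => ∀ y ∈ s, ¬ G.Adj x y).card) := by
          rw [Finset.sum_add_distrib, Finset.sum_add_distrib, Finset.sum_const, smul_eq_mul,
            ← Finset.mul_sum, ← Finset.mul_sum, sumC, sumD]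
          ring
      _ ≤ ∑ s ∈ G.cliqueFinset 3, ∑ x : V,
            (((pairsOf s).filter fun e => x ∈ cS G e).card
              + ((pairsOf s).filter fun e => x ∈ nS G e).card) := by
          refine Finset.sum_le_sum fun s hs => ?_
          have hxsum : ∑ x : V, (1 + 2 * (if ∀ y ∈ s, G.Adj x y then 1 else 0)
                + 2 * (if ∀ y ∈ s, ¬ G.Adj x y then 1 else 0))
              = Fintype.card V
                + 2 * (univ.filter fun x => ∀ y ∈ s, G.Adj x y).card
                + 2 * (univ.filter fun x => ∀ y ∈ s, ¬ G.Adj x y).card := by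
            rw [Finset.sum_add_distrib, Finset.sum_add_distrib, Finset.sum_const, smul_eq_mul,
              mul_one, ← Finset.mul_sum, ← Finset.mul_sum, ← Finset.card_filter,
              ← Finset.card_filter, Finset.card_univ]
          rw [← hxsum]
          exact Finset.sum_le_sum fun x _ => key G s hs x
      _ = ∑ s ∈ G.cliqueFinset 3, ∑ e ∈ pairsOf s, ((cS G e).card + (nS G e).card) :=
          Finset.sum_congr rfl fun s _ => (swap1 G s).symm
      _ = ∑ e ∈ G.edgeFinset, (cS G e).card * ((cS G e).card + (nS G e).card) :=
          sumA G _
      _ ≤ ∑ e ∈ G.edgeFinset, ((cS G e).card + (nS G e).card) * bk G := by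
          refine Finset.sum_le_sum fun e he => ?_
          calc (cS G e).card * ((cS G e).card + (nS G e).card)
              = ((cS G e).card + (nS G e).card) * (cS G e).card := mul_comm _ _
            _ ≤ ((cS G e).card + (nS G e).card) * bk G :=
                Nat.mul_le_mul_left _ (cS_le_bk G he)
      _ = (∑ e ∈ G.edgeFinset, ((cS G e).card + (nS G e).card)) * bk G :=
          (Finset.sum_mul _ _ _).symm
  -- the factor identity
  have hF1 : ∑ e ∈ G.edgeFinset, (cS G e).card = 3 * (G.cliqueFinset 3).card := by
    have h := sumA G (fun _ => 1)
    have h2 : ∀ s ∈ G.cliqueFinset 3, (∑ _e ∈ pairsOf s, (1 : ℕ)) = 3 := fun s hs => by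
      rw [Finset.sum_const, smul_eq_mul, mul_one, pairs_card3 G hs]
    rw [Finset.sum_congr rfl h2, Finset.sum_const, smul_eq_mul] at h
    simp only [mul_one] at h
    rw [← h, mul_comm]
  have hNat : (∑ e ∈ G.edgeFinset, (nS G e).card) + ∑ v : V, G.degree v * G.degree v
      = G.edgeFinset.card * Fintype.card V + 3 * (G.cliqueFinset 3).card := by
    rw [← sum_degSum, ← Finset.sum_add_distrib,
      Finset.sum_congr rfl (fun e he => edge_identity G he), Finset.sum_add_distrib,
      Finset.sum_const, smul_eq_mul, hF1]
  have hsq : ∑ i : V, (G.degree i : ℤ) ^ 2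
      = ((∑ v : V, G.degree v * G.degree v : ℕ) : ℤ) := by
    push_cast
    simp [sq]
  have hfac : 6 * ((cliqueCount G 3 : ℕ) : ℤ) - ∑ i : V, (G.degree i : ℤ) ^ 2
        + ((Fintype.card V : ℕ) : ℤ) * ((G.edgeFinset.card : ℕ) : ℤ)
      = ((∑ e ∈ G.edgeFinset, ((cS G e).card + (nS G e).card) : ℕ) : ℤ) := by
    have h1 : ((∑ e ∈ G.edgeFinset, (nS G e).card : ℕ) : ℤ)
        + ((∑ v : V, G.degree v * G.degree v : ℕ) : ℤ)
        = (G.edgeFinset.card : ℤ) * (Fintype.card V : ℤ)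
          + 3 * ((G.cliqueFinset 3).card : ℤ) := by exact_mod_cast hNat
    have h2 : ((∑ e ∈ G.edgeFinset, (cS G e).card : ℕ) : ℤ)
        = 3 * ((G.cliqueFinset 3).card : ℤ) := by exact_mod_cast hF1
    rw [hsq]
    push_cast
    rw [Finset.sum_add_distrib]
    push_cast at h1 h2
    have hk : ((cliqueCount G 3 : ℕ) : ℤ) = ((G.cliqueFinset 3).card : ℤ) := by
      simp [cliqueCount]
    rw [hk]
    linarith
  rw [ge_iff_le, hfac]
  have hrhs : ((Fintype.card V : ℕ) : ℤ) * (cliqueCount G 3 : ℤ) + 8 * (cliqueCount G 4 : ℤ)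
      + 2 * (inducedCopies G (K4j 3) : ℤ)
      = ((Fintype.card V * (G.cliqueFinset 3).card + 8 * (G.cliqueFinset 4).card
          + 2 * inducedCopies G (K4j 3) : ℕ) : ℤ) := by
    push_cast
    simp [cliqueCount]
  rw [hrhs]
  exact_mod_cast hchain
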